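/- For any bipartite ordered process W on A_I ⊗ A_O ⊗ B_I, the operator (1/d_{A_I})W + (1 − 1/d_{A_I})·(Λ_∖^{A_I} ⊗ id)(W) is a direct-cause-plus-common-cause (classical CCDC) process, where Λ_∖(ρ) = (1/(d_{A_I}−1))Σ_{k=1}^{d_{A_I}−1} Z^k ρ Z^{-k}; consequently the generalized robustness of any process satisfies R_G(W) ≤ 1 − 1/d_{A_I}. -/

import Mathlib

open Matrix ComplexOrder

/-- Direct-cause processes: `W = Σ_k w_k ρ_k^{A_I} ⊗ D_k^{A_O B_I}` with `ρ_k` states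
and `D_k` Choi operators of channels from `A_O` to `B_I`. -/
def IsDC (nI nO nB : ℕ)
    (W : Matrix (Fin nI × Fin nO × Fin nB) (Fin nI × Fin nO × Fin nB) ℂ) : Prop :=
  ∃ (m : ℕ) (w : Fin m → ℝ) (ρs : Fin m → Matrix (Fin nI) (Fin nI) ℂ)
    (Ds : Fin m → Matrix (Fin nO × Fin nB) (Fin nO × Fin nB) ℂ),
    (∀ k, 0 ≤ w k) ∧ (∑ k, w k) = 1 ∧
    (∀ k, (ρs k).PosSemidef) ∧ (∀ k, (ρs k).trace = 1) ∧
    (∀ k, (Ds k).PosSemidef) ∧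
    (∀ k a a', (∑ b : Fin nB, Ds k (a, b) (a', b)) = if a = a' then 1 else 0) ∧
    W = ∑ k, (w k : ℂ) • Matrix.of fun p q : Fin nI × Fin nO × Fin nB =>
      ρs k p.1 q.1 * Ds k p.2 q.2

/-- Common-cause processes: `W = ρ^{A_I B_I} ⊗ 1^{A_O}` with `ρ` a state. -/
def IsCC (nI nO nB : ℕ)
    (W : Matrix (Fin nI × Fin nO × Fin nB) (Fin nI × Fin nO × Fin nB) ℂ) : Prop :=
  ∃ ρ : Matrix (Fin nI × Fin nB) (Fin nI × Fin nB) ℂ, ρ.PosSemidef ∧ ρ.trace = 1 ∧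
    W = Matrix.of fun p q : Fin nI × Fin nO × Fin nB =>
      ρ (p.1, p.2.2) (q.1, q.2.2) * (if p.2.1 = q.2.1 then 1 else 0)

/-- Classical CCDC processes: convex mixtures of a common-cause and a direct-cause
process. -/
def IsCCDC (nI nO nB : ℕ)
    (W : Matrix (Fin nI × Fin nO × Fin nB) (Fin nI × Fin nO × Fin nB) ℂ) : Prop :=
  ∃ (p : ℝ) (Wcc Wdc : Matrix (Fin nI × Fin nO × Fin nB) (Fin nI × Fin nO × Fin nB) ℂ),
    0 ≤ p ∧ p ≤ 1 ∧ IsCC nI nO nB Wcc ∧ IsDC nI nO nB Wdc ∧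
    W = (p : ℂ) • Wcc + ((1 - p : ℝ) : ℂ) • Wdc

/-- Bipartite ordered processes: `W ⪰ 0` and `tr_{B_I}(W) = σ ⊗ 1^{A_O}` for some
state `σ`. -/
def IsOrdered (nI nO nB : ℕ)
    (W : Matrix (Fin nI × Fin nO × Fin nB) (Fin nI × Fin nO × Fin nB) ℂ) : Prop :=
  W.PosSemidef ∧ ∃ σ : Matrix (Fin nI) (Fin nI) ℂ, σ.PosSemidef ∧ σ.trace = 1 ∧
    ∀ i a j a', (∑ b : Fin nB, W (i, a, b) (j, a', b))
      = σ i j * (if a = a' then 1 else 0)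

/-- For any bipartite ordered process `W`, the mixture
`(1/d_{A_I})W + (1 − 1/d_{A_I})(Λ∖ ⊗ id)(W)` with
`Λ∖(ρ) = (1/(d_{A_I}−1)) Σ_{k=1}^{d_{A_I}−1} Z^k ρ Z^{-k}` is a classical CCDC process,
`(Λ∖ ⊗ id)(W)` is itself a valid ordered process, and consequently the generalized
robustness satisfies `R_G(W) ≤ 1 − 1/d_{A_I}`. -/


lemma psdSmulReal {n : Type*} [Fintype n] {M : Matrix n n ℂ} (hM : M.PosSemidef)
    {c : ℝ} (hc : 0 ≤ c) : ((c : ℂ) • M).PosSemidef := by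
  constructor
  · unfold Matrix.IsHermitian
    rw [conjTranspose_smul, hM.1.eq, Complex.star_def, Complex.conj_ofReal]
  · exact (hM.smul (show (0:ℂ) ≤ (c:ℂ) by exact_mod_cast hc)).2

lemma psdSum {n ι : Type*} [Fintype n] (s : Finset ι) (f : ι → Matrix n n ℂ)
    (h : ∀ i ∈ s, (f i).PosSemidef) : (∑ i ∈ s, f i).PosSemidef := by
  classical
  induction s using Finset.induction_on with
  | empty => simpa using Matrix.PosSemidef.zero
  | insert _ _ hx ih =>
    rw [Finset.sum_insert hx]
    exact (h _ (Finset.mem_insert_self _ _)).add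
      (ih fun i hi => h i (Finset.mem_insert_of_mem hi))

lemma auxDephPSD {m : Type*} [Fintype m] [DecidableEq m] (nI : ℕ) (ω : ℂ)
    (hconj : ∀ k : ℕ, (starRingEnd ℂ) (ω ^ k) = (ω ^ k)⁻¹)
    (M : Matrix m m ℂ) (hM : M.PosSemidef) (g : m → Fin nI) (c : ℝ) (hc : 0 ≤ c) :
    (Matrix.of fun p q => (c : ℂ) *
      ((∑ k ∈ Finset.Ico 1 nI, (ω ^ ((g p : ℕ)) * (ω ^ ((g q : ℕ)))⁻¹) ^ k) * M p q)).PosSemidef := by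
  have key : (Matrix.of fun p q => (c : ℂ) *
      ((∑ k ∈ Finset.Ico 1 nI, (ω ^ ((g p : ℕ)) * (ω ^ ((g q : ℕ)))⁻¹) ^ k) * M p q))
      = (c : ℂ) • ∑ k ∈ Finset.Ico 1 nI,
        (Matrix.diagonal fun p => (ω ^ ((g p : ℕ))) ^ k) * M *
          (Matrix.diagonal fun p => (ω ^ ((g p : ℕ))) ^ k)ᴴ := by
    ext p q
    have hst : star ω = ω⁻¹ := by simpa using hconj 1
    simp only [Matrix.of_apply, Matrix.smul_apply, Matrix.sum_apply, smul_eq_mul,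
      Matrix.diagonal_conjTranspose, Matrix.mul_diagonal, Matrix.diagonal_mul,
      Pi.star_apply, star_pow, hst, Finset.sum_mul]
    congr 1
    refine Finset.sum_congr rfl fun k _ => ?_
    rw [mul_pow, inv_pow, ← inv_pow, ← inv_pow]
    ring
  rw [key]
  refine psdSmulReal (psdSum _ _ fun k _ => hM.mul_mul_conjTranspose_same _) hc

theorem stmt_18 (nI nO nB : ℕ) (hnI : 2 ≤ nI) (hnO : 1 ≤ nO) (hnB : 1 ≤ nB)
    (ω : ℂ) (hω : ω = Complex.exp (2 * Real.pi * Complex.I / nI))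
    (Z : Matrix (Fin nI) (Fin nI) ℂ)
    (hZ : Z = Matrix.diagonal fun i : Fin nI => ω ^ (i : ℕ))
    (Λs : Matrix (Fin nI) (Fin nI) ℂ → Matrix (Fin nI) (Fin nI) ℂ)
    (hΛs : ∀ ρ, Λs ρ = ((nI : ℂ) - 1)⁻¹ •
      ∑ k ∈ Finset.Ico 1 nI, Z ^ k * ρ * Z⁻¹ ^ k)
    (W : Matrix (Fin nI × Fin nO × Fin nB) (Fin nI × Fin nO × Fin nB) ℂ)
    (hWord : IsOrdered nI nO nB W)
    (Ω : Matrix (Fin nI × Fin nO × Fin nB) (Fin nI × Fin nO × Fin nB) ℂ)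
    (hΩ : Ω = Matrix.of fun p q : Fin nI × Fin nO × Fin nB =>
      Λs (Matrix.of fun i j => W (i, p.2) (j, q.2)) p.1 q.1) :
    IsOrdered nI nO nB Ω ∧
    IsCCDC nI nO nB (((nI : ℂ))⁻¹ • W + (1 - ((nI : ℂ))⁻¹) • Ω) ∧
    sInf {r : ℝ | 0 ≤ r ∧ r ≤ 1 ∧
        ∃ Ω' : Matrix (Fin nI × Fin nO × Fin nB) (Fin nI × Fin nO × Fin nB) ℂ,
          IsOrdered nI nO nB Ω' ∧
          IsCCDC nI nO nB (((1 - r : ℝ) : ℂ) • W + (r : ℂ) • Ω')}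
      ≤ 1 - ((nI : ℝ))⁻¹ := by
  obtain ⟨hWpsd, σ, hσpsd, hσtr, hσpt⟩ := hWord

  classical
  have hnIpos : 0 < nI := by omega
  have hnI0 : (nI : ℂ) ≠ 0 := Nat.cast_ne_zero.mpr (by omega)
  have hnI1 : (nI : ℂ) - 1 ≠ 0 := by
    intro h
    have : (nI : ℂ) = 1 := by linear_combination h
    exact absurd (by exact_mod_cast this : nI = 1) (by omega)
  have hωprim : IsPrimitiveRoot ω nI := hω ▸ Complex.isPrimitiveRoot_exp nI (by omega)
  have hω0 : ω ≠ 0 := hωprim.ne_zero (by omega)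
  have hconjω : (starRingEnd ℂ) ω = ω⁻¹ := by
    rw [hω, ← Complex.exp_conj, ← Complex.exp_neg]
    congr 1
    simp [map_div₀, Complex.conj_I, map_ofNat]
    ring
  have hconj : ∀ k : ℕ, (starRingEnd ℂ) (ω ^ k) = (ω ^ k)⁻¹ := fun k => by
    rw [map_pow, hconjω, inv_pow]
  -- Z⁻¹
  have hZinv : Z⁻¹ = Matrix.diagonal fun i : Fin nI => (ω ^ (i : ℕ))⁻¹ := by
    apply Matrix.inv_eq_right_inv
    rw [hZ, Matrix.diagonal_mul_diagonal,
      show (fun i : Fin nI => ω ^ (i : ℕ) * (ω ^ (i : ℕ))⁻¹) = fun _ => (1 : ℂ) from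
        funext fun i => mul_inv_cancel₀ (pow_ne_zero _ hω0), Matrix.diagonal_one]
  set T : Fin nI → Fin nI → ℂ :=
    fun i j => ∑ k ∈ Finset.Ico 1 nI, (ω ^ (i : ℕ) * (ω ^ (j : ℕ))⁻¹) ^ k with hTdef
  have hΛentry : ∀ ρ (i j : Fin nI), Λs ρ i j = ((nI : ℂ) - 1)⁻¹ * (T i j * ρ i j) := by
    intro ρ i j
    rw [hΛs]
    rw [Matrix.smul_apply, Matrix.sum_apply, smul_eq_mul]
    congr 1
    rw [hTdef, Finset.sum_mul]
    refine Finset.sum_congr rfl fun k _ => ?_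
    rw [hZinv, hZ, Matrix.diagonal_pow, Matrix.diagonal_pow, Matrix.mul_diagonal,
      Matrix.diagonal_mul, Pi.pow_apply, Pi.pow_apply, mul_pow]
    ring
  have hT : ∀ i j : Fin nI, T i j = if i = j then (nI : ℂ) - 1 else -1 := by
    intro i j
    by_cases h : i = j
    · subst h
      simp only [hTdef, mul_inv_cancel₀ (pow_ne_zero _ hω0), one_pow, Finset.sum_const,
        Nat.card_Ico, nsmul_eq_mul, mul_one, if_pos rfl]
      push_cast [Nat.cast_sub (by omega : 1 ≤ nI)]
      ring
    · have hx : ω ^ (i : ℕ) * (ω ^ (j : ℕ))⁻¹ ≠ 1 := by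
        intro hx1
        apply h
        have hij : ω ^ (i : ℕ) = ω ^ (j : ℕ) := by
          field_simp at hx1
          exact hx1
        exact Fin.ext (hωprim.pow_inj i.isLt j.isLt hij)
      have hxn : (ω ^ (i : ℕ) * (ω ^ (j : ℕ))⁻¹) ^ nI = 1 := by
        rw [mul_pow, ← pow_mul, mul_comm (i : ℕ) nI, pow_mul, hωprim.pow_eq_one, one_pow,
          ← inv_pow, ← pow_mul, mul_comm (j : ℕ) nI, pow_mul]
        simp [hωprim.pow_eq_one]
      have hgeom : ∑ k ∈ Finset.range nI, (ω ^ (i : ℕ) * (ω ^ (j : ℕ))⁻¹) ^ k = 0 := by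
        rw [geom_sum_eq hx, hxn]
        simp
      rw [if_neg h]
      have hTij : T i j = ∑ k ∈ Finset.Ico 1 nI, (ω ^ (i : ℕ) * (ω ^ (j : ℕ))⁻¹) ^ k := rfl
      rw [hTij, Finset.sum_Ico_eq_sub _ (by omega : 1 ≤ nI), hgeom]
      simp
  have hΩe : ∀ p q, Ω p q = ((nI : ℂ) - 1)⁻¹ * (T p.1 q.1 * W p q) := by
    intro p q
    rw [hΩ, Matrix.of_apply, hΛentry, Matrix.of_apply]
  -- Part 1 : IsOrdered Ω
  have h1le : (1:ℝ) ≤ (nI:ℝ) := by exact_mod_cast (by omega : 1 ≤ nI)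
  have hinv_nonneg : (0:ℝ) ≤ ((nI:ℝ) - 1)⁻¹ := inv_nonneg.mpr (by linarith)
  have hcastc : ((((nI:ℝ) - 1)⁻¹ : ℝ) : ℂ) = ((nI:ℂ) - 1)⁻¹ := by push_cast; ring
  have hΩpsd : Ω.PosSemidef := by
    have hgen := auxDephPSD nI ω hconj W hWpsd (fun p => p.1) (((nI:ℝ)-1)⁻¹) hinv_nonneg
    have heq : Ω = Matrix.of fun p q : Fin nI × Fin nO × Fin nB =>
        ((((nI:ℝ)-1)⁻¹ : ℝ) : ℂ) *
          ((∑ k ∈ Finset.Ico 1 nI, (ω ^ ((p.1:ℕ)) * (ω ^ ((q.1:ℕ)))⁻¹) ^ k) * W p q) := by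
      ext p q
      rw [Matrix.of_apply, hcastc, hΩe]
    rw [heq]
    exact hgen
  set σ' : Matrix (Fin nI) (Fin nI) ℂ :=
    Matrix.of fun i j => ((nI:ℂ) - 1)⁻¹ * (T i j * σ i j) with hσ'def
  have hσ'psd : σ'.PosSemidef := by
    have hgen := auxDephPSD nI ω hconj σ hσpsd (fun i => i) (((nI:ℝ)-1)⁻¹) hinv_nonneg
    have heq : σ' = Matrix.of fun i j : Fin nI =>
        ((((nI:ℝ)-1)⁻¹ : ℝ) : ℂ) *
          ((∑ k ∈ Finset.Ico 1 nI, (ω ^ ((i:ℕ)) * (ω ^ ((j:ℕ)))⁻¹) ^ k) * σ i j) := by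
      ext i j
      rw [hσ'def, Matrix.of_apply, Matrix.of_apply, hcastc]
    rw [heq]
    exact hgen
  have hσ'tr : σ'.trace = 1 := by
    have : ∀ i : Fin nI, σ' i i = σ i i := by
      intro i
      rw [hσ'def, Matrix.of_apply, hT, if_pos rfl, ← mul_assoc, inv_mul_cancel₀ hnI1, one_mul]
    rw [Matrix.trace]
    simp only [Matrix.diag, this]
    exact hσtr
  have hσ'pt : ∀ i a j a', (∑ b : Fin nB, Ω (i, a, b) (j, a', b))
      = σ' i j * (if a = a' then 1 else 0) := by
    intro i a j a'
    have : ∀ b : Fin nB, Ω (i, a, b) (j, a', b)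
        = ((nI:ℂ) - 1)⁻¹ * (T i j * W (i, a, b) (j, a', b)) := fun b => hΩe (i,a,b) (j,a',b)
    simp only [this, ← Finset.mul_sum, ← Finset.sum_mul]
    rw [hσpt, hσ'def, Matrix.of_apply]
    ring
  have part1 : (W.PosSemidef ∧ ∃ σ₀ : Matrix (Fin nI) (Fin nI) ℂ, σ₀.PosSemidef ∧
      σ₀.trace = 1 ∧ ∀ i a j a', (∑ b : Fin nB, Ω (i, a, b) (j, a', b))
        = σ₀ i j * (if a = a' then 1 else 0)) := ⟨hWpsd, σ', hσ'psd, hσ'tr, hσ'pt⟩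
  -- part 1 packaged
  have part1 : IsOrdered nI nO nB Ω := ⟨hΩpsd, σ', hσ'psd, hσ'tr, hσ'pt⟩
  -- dephased process
  set D : Matrix (Fin nI × Fin nO × Fin nB) (Fin nI × Fin nO × Fin nB) ℂ :=
    Matrix.of (fun p q => if p.1 = q.1 then W p q else 0) with hDdef
  have hmix : (nI:ℂ)⁻¹ • W + (1 - (nI:ℂ)⁻¹) • Ω = D := by
    ext p q
    rw [Matrix.add_apply, Matrix.smul_apply, Matrix.smul_apply, smul_eq_mul, smul_eq_mul,
      hΩe, hT, hDdef, Matrix.of_apply]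
    by_cases h : p.1 = q.1
    · rw [if_pos h, if_pos h]
      field_simp
      ring
    · rw [if_neg h, if_neg h]
      field_simp
      ring
  -- W = Bᴴ B
  obtain ⟨B, hB⟩ : ∃ B : Matrix (Fin nI × Fin nO × Fin nB) (Fin nI × Fin nO × Fin nB) ℂ, W = Bᴴ * B := by
    open MatrixOrder in exact CStarAlgebra.nonneg_iff_eq_star_mul_self.mp hWpsd.nonneg
  have hWentry : ∀ p q, W p q = ∑ m, (starRingEnd ℂ) (B m p) * B m q := by
    intro p q
    rw [hB]
    simp [Matrix.mul_apply, Matrix.conjTranspose_apply, Complex.star_def]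
  have hdiagW : ∀ p, W p p = ((∑ m, Complex.normSq (B m p) : ℝ) : ℂ) := by
    intro p
    rw [hWentry]
    push_cast
    exact Finset.sum_congr rfl fun m _ => (mul_comm _ _).trans (Complex.mul_conj _)
  have hWzero : ∀ i : Fin nI, σ i i = 0 → ∀ r s : Fin nO × Fin nB, W (i, r) (i, s) = 0 := by
    intro i hσ0 r s
    have hcol : ∀ (t : Fin nO × Fin nB) (m), B m (i, t) = 0 := by
      intro t m
      have hsum : ∑ b : Fin nB, W (i, t.1, b) (i, t.1, b) = 0 := by
        rw [hσpt i t.1 i t.1, hσ0]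
        simp
      have hsum' : ∑ b : Fin nB, (∑ m, Complex.normSq (B m (i, t.1, b))) = 0 := by
        have hc : ((∑ b : Fin nB, ∑ m, Complex.normSq (B m (i, t.1, b)) : ℝ) : ℂ) = 0 := by
          push_cast
          rw [← hsum]
          refine Finset.sum_congr rfl fun b _ => ?_
          rw [hdiagW]
          push_cast
          rfl
        exact_mod_cast hc
      have h1 := (Finset.sum_eq_zero_iff_of_nonneg
        (fun b _ => Finset.sum_nonneg fun m _ => Complex.normSq_nonneg _)).mp hsum'
        t.2 (Finset.mem_univ _)
      have h2 := (Finset.sum_eq_zero_iff_of_nonneg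
        (fun m _ => Complex.normSq_nonneg _)).mp h1 m (Finset.mem_univ _)
      exact Complex.normSq_eq_zero.mp h2
    rw [hWentry]
    refine Finset.sum_eq_zero fun m _ => ?_
    rw [hcol s m, mul_zero]
  -- diagonal of σ is real and nonnegative
  obtain ⟨C, hC⟩ : ∃ C : Matrix (Fin nI) (Fin nI) ℂ, σ = Cᴴ * C := by
    open MatrixOrder in exact CStarAlgebra.nonneg_iff_eq_star_mul_self.mp hσpsd.nonneg
  have hσdiag : ∀ i, σ i i = ((∑ m, Complex.normSq (C m i) : ℝ) : ℂ) := by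
    intro i
    rw [hC]
    simp only [Matrix.mul_apply, Matrix.conjTranspose_apply, Complex.star_def]
    push_cast
    exact Finset.sum_congr rfl fun m _ => (mul_comm _ _).trans (Complex.mul_conj _)
  set w : Fin nI → ℝ := fun i => (σ i i).re with hwdef
  have hre : ∀ i, (σ i i).re = ∑ m, Complex.normSq (C m i) := by
    intro i
    rw [hσdiag i, Complex.ofReal_re]
  have hwcast : ∀ i, (w i : ℂ) = σ i i := by
    intro i
    show ((σ i i).re : ℂ) = σ i i
    rw [hre i, ← hσdiag i]
  have hwnonneg : ∀ i, 0 ≤ w i := by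
    intro i
    show 0 ≤ (σ i i).re
    rw [hre i]
    exact Finset.sum_nonneg fun m _ => Complex.normSq_nonneg _
  have hwsum : ∑ i, w i = 1 := by
    have h := congrArg Complex.re hσtr
    rw [Matrix.trace] at h
    simpa [Matrix.diag, Complex.re_sum, hwdef] using h
  -- ρs and Ds
  set ρs : Fin nI → Matrix (Fin nI) (Fin nI) ℂ :=
    fun i => Matrix.diagonal (Pi.single i 1) with hρdef
  have hρpsd : ∀ i, (ρs i).PosSemidef := by
    intro i
    refine Matrix.PosSemidef.diagonal fun j => ?_
    by_cases h : j = i <;> simp [Pi.single_apply, h]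
  have hρtr : ∀ i, (ρs i).trace = 1 := by
    intro i
    simp [hρdef, Matrix.trace_diagonal]
  set Ds : Fin nI → Matrix (Fin nO × Fin nB) (Fin nO × Fin nB) ℂ :=
    fun i => if σ i i = 0 then
        (((nB:ℝ)⁻¹ : ℝ) : ℂ) • (1 : Matrix (Fin nO × Fin nB) (Fin nO × Fin nB) ℂ)
      else (((w i)⁻¹ : ℝ) : ℂ) • Matrix.of (fun r s => W (i, r) (i, s)) with hDsdef
  have hnB0 : (nB:ℝ) ≠ 0 := Nat.cast_ne_zero.mpr (by omega)
  have hDspsd : ∀ i, (Ds i).PosSemidef := by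
    intro i
    simp only [hDsdef]
    by_cases h : σ i i = 0
    · rw [if_pos h]
      exact psdSmulReal Matrix.PosSemidef.one (by positivity)
    · rw [if_neg h]
      exact psdSmulReal (hWpsd.submatrix (fun r => (i, r))) (inv_nonneg.mpr (hwnonneg i))
  have hDspt : ∀ i a a', (∑ b : Fin nB, Ds i (a,b) (a',b)) = if a = a' then 1 else 0 := by
    intro i a a'
    simp only [hDsdef]
    by_cases h : σ i i = 0
    · rw [if_pos h]
      simp only [Matrix.smul_apply, smul_eq_mul, Matrix.one_apply, Prod.mk.injEq]
      by_cases haa : a = a'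
      · simp [haa, Finset.card_univ, hnB0]
        field_simp
      · simp [haa]
    · rw [if_neg h]
      have hw0 : w i ≠ 0 := fun h0 => h (by rw [← hwcast i, h0]; simp)
      simp only [Matrix.smul_apply, Matrix.of_apply, smul_eq_mul, ← Finset.mul_sum]
      rw [hσpt i a i a', ← hwcast i, Complex.ofReal_inv, ← mul_assoc,
        inv_mul_cancel₀ (by exact_mod_cast hw0), one_mul]
  -- D is the claimed sum
  have hDsum : D = ∑ i, (w i : ℂ) • Matrix.of (fun p q : Fin nI × Fin nO × Fin nB =>
      ρs i p.1 q.1 * Ds i p.2 q.2) := by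
    ext p q
    rw [hDdef, Matrix.of_apply, Matrix.sum_apply]
    have hterm : ∀ i, ((w i:ℂ) • Matrix.of (fun p q : Fin nI × Fin nO × Fin nB =>
        ρs i p.1 q.1 * Ds i p.2 q.2)) p q
        = if i = p.1 ∧ p.1 = q.1 then (w i : ℂ) * Ds i p.2 q.2 else 0 := by
      intro i
      rw [Matrix.smul_apply, Matrix.of_apply, smul_eq_mul]
      have hρe : ρs i p.1 q.1 = if p.1 = q.1 then (if p.1 = i then 1 else 0) else 0 := by
        simp only [hρdef]
        rw [Matrix.diagonal_apply, Pi.single_apply]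
      rw [hρe]
      split_ifs with h1 h2 h3 h3 h3
      · ring
      · exact (h3 ⟨h2.symm, h1⟩).elim
      · exact (h2 h3.1.symm).elim
      · ring
      · exact (h1 h3.2).elim
      · ring
    rw [Finset.sum_congr rfl fun i _ => hterm i]
    by_cases h : p.1 = q.1
    · rw [if_pos h]
      have hcollapse : ∀ i : Fin nI, (if i = p.1 ∧ p.1 = q.1 then (w i:ℂ) * Ds i p.2 q.2 else 0)
          = if i = p.1 then (w i:ℂ) * Ds i p.2 q.2 else 0 := fun i => by simp [h]
      rw [Finset.sum_congr rfl fun i _ => hcollapse i,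
        Finset.sum_ite_eq' Finset.univ p.1 (fun i => (w i:ℂ) * Ds i p.2 q.2),
        if_pos (Finset.mem_univ _)]
      rw [show q = (p.1, q.2) from Prod.ext h.symm rfl]
      by_cases h0 : σ p.1 p.1 = 0
      · have hw0 : w p.1 = 0 := by
          have hcc := hwcast p.1
          rw [h0] at hcc
          exact_mod_cast hcc
        rw [hWzero p.1 h0 p.2 q.2, hw0]
        simp
      · have hw0r : w p.1 ≠ 0 := fun hh => h0 (by rw [← hwcast p.1, hh]; simp)
        simp only [hDsdef, if_neg h0, Matrix.smul_apply, Matrix.of_apply, smul_eq_mul]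
        have hww : (w p.1 : ℂ) * (((w p.1)⁻¹ : ℝ) : ℂ) = 1 := by
          rw [← Complex.ofReal_mul, mul_inv_cancel₀ hw0r, Complex.ofReal_one]
        rw [← mul_assoc, hww, one_mul]
    · rw [if_neg h]
      exact (Finset.sum_eq_zero fun i _ => if_neg (fun hc => h hc.2)).symm
  have hDdc : IsDC nI nO nB D := by
    refine ⟨nI, fun i => w i, fun i => ρs i, fun i => Ds i, fun i => hwnonneg i, ?_,
      fun i => hρpsd i, fun i => hρtr i, fun i => hDspsd i, fun i a a' => hDspt i a a', ?_⟩
    · rw [← hwsum]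
    · rw [hDsum]
  -- common-cause witness
  have hnInB0 : ((nI : ℝ) * nB) ≠ 0 := by positivity
  set ρcc : Matrix (Fin nI × Fin nB) (Fin nI × Fin nB) ℂ :=
    ((((nI:ℝ) * nB)⁻¹ : ℝ) : ℂ) • 1 with hρccdef
  set Wcc : Matrix (Fin nI × Fin nO × Fin nB) (Fin nI × Fin nO × Fin nB) ℂ :=
    Matrix.of (fun p q => ρcc (p.1, p.2.2) (q.1, q.2.2) * (if p.2.1 = q.2.1 then 1 else 0))
    with hWccdef
  have hWcc : IsCC nI nO nB Wcc := by
    refine ⟨ρcc, psdSmulReal Matrix.PosSemidef.one (by positivity), ?_, rfl⟩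
    rw [hρccdef, Matrix.trace_smul, Matrix.trace_one]
    simp [Fintype.card_prod]
    field_simp
  have part2 : IsCCDC nI nO nB ((nI:ℂ)⁻¹ • W + (1 - (nI:ℂ)⁻¹) • Ω) := by
    refine ⟨0, Wcc, D, le_refl 0, zero_le_one, hWcc, hDdc, ?_⟩
    rw [hmix]
    norm_num
  refine ⟨part1, part2, ?_⟩
  -- part 3
  have hmem : (1 - (nI:ℝ)⁻¹) ∈ {r : ℝ | 0 ≤ r ∧ r ≤ 1 ∧
      ∃ Ω' : Matrix (Fin nI × Fin nO × Fin nB) (Fin nI × Fin nO × Fin nB) ℂ,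
        IsOrdered nI nO nB Ω' ∧
        IsCCDC nI nO nB (((1 - r : ℝ) : ℂ) • W + (r : ℂ) • Ω')} := by
    have hnIR : (0:ℝ) < nI := by exact_mod_cast hnIpos
    refine ⟨by rw [sub_nonneg]; exact inv_le_one_of_one_le₀ h1le, by simp [inv_nonneg.mpr hnIR.le], Ω, part1, ?_⟩
    have e1 : ((1 - (1 - (nI:ℝ)⁻¹) : ℝ) : ℂ) = (nI:ℂ)⁻¹ := by push_cast; ring
    have e2 : ((1 - (nI:ℝ)⁻¹ : ℝ) : ℂ) = 1 - (nI:ℂ)⁻¹ := by push_cast; ring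
    rw [e1, e2]
    exact part2
  exact csInf_le ⟨0, fun r hr => hr.1⟩ hmem
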